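/- Let n ≥ 1 be an integer, θ ∈ (0,1), c ≥ 1 an integer, and S a nonempty subset of {1,…,n}. The function f_S : ℝ^n → ℝ defined by f_S(p) = 1 / (1 − θ(1 − Σ_{i∈S} p_i)^c) is convex on the standard simplex {p ∈ ℝ^n : p_i ≥ 0 for all i, Σ_{i=1}^n p_i = 1}. -/
import Mathlib

open Set

lemma aux_inv_convex {E : Type*} [AddCommGroup E] [Module ℝ E] {s : Set E} {h : E → ℝ}
    (hh : ConcaveOn ℝ s h) (hpos : ∀ x ∈ s, 0 < h x) :
    ConvexOn ℝ s (fun x => (h x)⁻¹) := by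
  refine ⟨hh.1, fun x hx y hy a b ha hb hab => ?_⟩
  have hx' := hpos x hx
  have hy' := hpos y hy
  have hcomb := hh.2 hx hy ha hb hab
  have hpos2 : 0 < a * h x + b * h y := by
    rcases eq_or_lt_of_le ha with h | h
    · have hb1 : b = 1 := by linarith
      rw [← h, hb1]; simpa using hy'
    · have := mul_pos h hx'
      nlinarith [mul_nonneg hb hy'.le]
  have hposc : 0 < h (a • x + b • y) := lt_of_lt_of_le hpos2 (by simpa using hcomb)
  have h1 : (h (a • x + b • y))⁻¹ ≤ (a * h x + b * h y)⁻¹ := by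
    apply inv_anti₀ hpos2
    simpa using hcomb
  have h2 := (convexOn_zpow (-1 : ℤ)).2 (mem_Ioi.mpr hx') (mem_Ioi.mpr hy') ha hb hab
  simp only [zpow_neg, zpow_one, smul_eq_mul] at h2
  calc (h (a • x + b • y))⁻¹ ≤ (a * h x + b * h y)⁻¹ := h1
    _ ≤ a * (h x)⁻¹ + b * (h y)⁻¹ := h2

/-- For `θ ∈ (0,1)`, integer `c ≥ 1` and a nonempty subset `S` of `{1,…,n}`,
the function `f_S(p) = 1/(1 − θ(1 − Σ_{i∈S} p_i)^c)` is convex on the standard simplex. -/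
theorem stmt2 (n : ℕ) (hn : 1 ≤ n) (θ : ℝ) (hθ : θ ∈ Set.Ioo (0 : ℝ) 1)
    (c : ℕ) (hc : 1 ≤ c) (S : Finset (Fin n)) (hS : S.Nonempty) :
    ConvexOn ℝ (stdSimplex ℝ (Fin n))
      (fun p : Fin n → ℝ => 1 / (1 - θ * (1 - ∑ i ∈ S, p i) ^ c)) := by
  obtain ⟨hθ0, hθ1⟩ := hθ
  -- basic bounds on the sum for p in the simplex
  have hsum : ∀ p ∈ stdSimplex ℝ (Fin n), 0 ≤ ∑ i ∈ S, p i ∧ ∑ i ∈ S, p i ≤ 1 := by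
    intro p hp
    constructor
    · exact Finset.sum_nonneg fun i _ => hp.1 i
    · rw [← hp.2]
      exact Finset.sum_le_sum_of_subset_of_nonneg (Finset.subset_univ S)
        (fun i _ _ => hp.1 i)
  -- the affine map p ↦ 1 - ∑_{i∈S} p i
  let L : (Fin n → ℝ) →ₗ[ℝ] ℝ := ∑ i ∈ S, LinearMap.proj i
  have hL : ∀ p, L p = ∑ i ∈ S, p i := by
    intro p; simp [L, LinearMap.sum_apply]
  let A : (Fin n → ℝ) →ᵃ[ℝ] ℝ := AffineMap.const ℝ (Fin n → ℝ) (1 : ℝ) - L.toAffineMap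
  have hA : ∀ p, A p = 1 - ∑ i ∈ S, p i := by
    intro p; simp [A, hL]
  -- convexity of p ↦ θ (1 - ∑ p i)^c on the simplex
  have hconv : ConvexOn ℝ (stdSimplex ℝ (Fin n))
      (fun p : Fin n → ℝ => θ * (1 - ∑ i ∈ S, p i) ^ c) := by
    have h1 : ConvexOn ℝ (A ⁻¹' Ici (0 : ℝ)) (fun p => (A p) ^ c) :=
      (convexOn_pow c).comp_affineMap A
    have hsub : stdSimplex ℝ (Fin n) ⊆ A ⁻¹' Ici (0 : ℝ) := by
      intro p hp
      have := (hsum p hp).2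
      simp only [mem_preimage, hA, mem_Ici]
      linarith
    have h2 := (h1.subset hsub (convex_stdSimplex ℝ (Fin n))).smul hθ0.le
    refine h2.congr fun p hp => ?_
    simp [hA, smul_eq_mul]
  -- concavity and positivity of the denominator
  have hconc : ConcaveOn ℝ (stdSimplex ℝ (Fin n))
      (fun p : Fin n → ℝ => 1 - θ * (1 - ∑ i ∈ S, p i) ^ c) := by
    have := hconv.neg.add_const (1 : ℝ)
    refine this.congr fun p hp => ?_
    simp only [Pi.add_apply, Pi.neg_apply]
    ring
  have hpos : ∀ p ∈ stdSimplex ℝ (Fin n), 0 < 1 - θ * (1 - ∑ i ∈ S, p i) ^ c := by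
    intro p hp
    obtain ⟨h0, h1⟩ := hsum p hp
    have hb0 : (0:ℝ) ≤ 1 - ∑ i ∈ S, p i := by linarith
    have hb1 : (1 - ∑ i ∈ S, p i) ^ c ≤ 1 := pow_le_one₀ hb0 (by linarith)
    have hbn : (0:ℝ) ≤ (1 - ∑ i ∈ S, p i) ^ c := pow_nonneg hb0 c
    nlinarith
  have := aux_inv_convex hconc hpos
  refine this.congr fun p hp => ?_
  rw [one_div]
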